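/- Let g_{ij̄}(z) be a smooth Hermitian metric in local coordinates near a point p with g_{ij̄}(p) = δ_{ij}. Define new coordinates w_r = z_r + ∑_{m≠r} (∂g_{rr̄}/∂z_m)(p) z_m z_r + (1/2)(∂g_{rr̄}/∂z_r)(p) z_r². Then in the w-coordinates the metric g̃_{ij̄} satisfies, at p: g̃_{ij̄} = δ_{ij} and ∂g̃_{iī}/∂w_k = 0 for all i, k; moreover ∂g̃_{ij̄}/∂w_j = T^j_{ji} at p for i ≠ j, where T^j_{ji} are the torsion components in the original coordinates. -/

import Mathlib

open Matrix

/-- Wirtinger derivative `∂f/∂zᵢ`. -/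
noncomputable def wD {n : ℕ} (i : Fin n) (f : (Fin n → ℂ) → ℂ) (x : Fin n → ℂ) : ℂ :=
  (fderiv ℝ f x (Pi.single i 1) - Complex.I * fderiv ℝ f x (Pi.single i Complex.I)) / 2

open Complex Filter

variable {n : ℕ}

lemma wD_congr {i : Fin n} {f g : (Fin n → ℂ) → ℂ} {x} (h : f =ᶠ[nhds x] g) :
    wD i f x = wD i g x := by
  unfold wD; rw [h.fderiv_eq]

lemma wD_const (i : Fin n) (c : ℂ) (x) : wD i (fun _ => c) x = 0 := by
  unfold wD; simp

lemma wD_add {i : Fin n} {f g : (Fin n → ℂ) → ℂ} {x} (hf : DifferentiableAt ℝ f x)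
    (hg : DifferentiableAt ℝ g x) :
    wD i (fun w => f w + g w) x = wD i f x + wD i g x := by
  unfold wD; rw [fderiv_fun_add hf hg]; simp; ring

lemma wD_mul {i : Fin n} {f g : (Fin n → ℂ) → ℂ} {x} (hf : DifferentiableAt ℝ f x)
    (hg : DifferentiableAt ℝ g x) :
    wD i (fun w => f w * g w) x = wD i f x * g x + f x * wD i g x := by
  unfold wD; rw [fderiv_fun_mul hf hg]; simp [smul_eq_mul]; ring

lemma wD_const_mul {i : Fin n} {f : (Fin n → ℂ) → ℂ} {x} (c : ℂ) (hf : DifferentiableAt ℝ f x) :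
    wD i (fun w => c * f w) x = c * wD i f x := by
  unfold wD; rw [fderiv_const_mul hf]; simp [smul_eq_mul]; ring

lemma wD_sum {i : Fin n} {α : Type*} {s : Finset α} {f : α → (Fin n → ℂ) → ℂ} {x}
    (hf : ∀ a ∈ s, DifferentiableAt ℝ (f a) x) :
    wD i (fun w => ∑ a ∈ s, f a w) x = ∑ a ∈ s, wD i (f a) x := by
  unfold wD; rw [fderiv_fun_sum hf]; rw [ContinuousLinearMap.sum_apply, ContinuousLinearMap.sum_apply, Finset.mul_sum,
    ← Finset.sum_sub_distrib, Finset.sum_div]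

lemma single_I (k : Fin n) :
    (Pi.single k Complex.I : Fin n → ℂ) = Complex.I • (Pi.single k 1 : Fin n → ℂ) := by
  ext j
  by_cases h : j = k <;> simp [h, Pi.single_apply]

lemma fderiv_holo_I {f : (Fin n → ℂ) → ℂ} {x} (h : DifferentiableAt ℂ f x) (k : Fin n) :
    fderiv ℝ f x (Pi.single k Complex.I) = Complex.I * fderiv ℝ f x (Pi.single k 1) := by
  rw [h.fderiv_restrictScalars ℝ, single_I]
  simp [_root_.map_smul, smul_eq_mul]

lemma wD_holo {f : (Fin n → ℂ) → ℂ} {x} (h : DifferentiableAt ℂ f x) (k : Fin n) :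
    wD k f x = fderiv ℝ f x (Pi.single k 1) := by
  unfold wD; rw [fderiv_holo_I h]; rw [show Complex.I * (Complex.I * (fderiv ℝ f x) (Pi.single k 1)) = - (fderiv ℝ f x) (Pi.single k 1) by rw [← mul_assoc, Complex.I_mul_I]; ring]
  ring

lemma conj_differentiableAt {f : (Fin n → ℂ) → ℂ} {x} (h : DifferentiableAt ℝ f x) :
    DifferentiableAt ℝ (fun w => (starRingEnd ℂ) (f w)) x := by
  have : (fun w => (starRingEnd ℂ) (f w)) = (⇑Complex.conjCLE) ∘ f := by
    funext w; simp [Complex.conjCLE_apply]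
  rw [this]
  exact Complex.conjCLE.differentiable.differentiableAt.comp x h

lemma fderiv_conj {f : (Fin n → ℂ) → ℂ} {x} (h : DifferentiableAt ℝ f x) (v : Fin n → ℂ) :
    fderiv ℝ (fun w => (starRingEnd ℂ) (f w)) x v = (starRingEnd ℂ) (fderiv ℝ f x v) := by
  have e : (fun w => (starRingEnd ℂ) (f w)) = (⇑Complex.conjCLE) ∘ f := by
    funext w; simp [Complex.conjCLE_apply]
  rw [e, Complex.conjCLE.comp_fderiv (f := f) (x := x)]
  simp [Complex.conjCLE_apply]

lemma linmap_expand (L : (Fin n → ℂ) →L[ℝ] ℂ) (v : Fin n → ℂ) :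
    L v = ∑ r, ((v r).re • L (Pi.single r 1) + (v r).im • L (Pi.single r Complex.I)) := by
  have hsingle : ∀ (c : ℂ) (r : Fin n),
      (Pi.single r c : Fin n → ℂ) = c.re • (Pi.single r 1 : Fin n → ℂ)
        + c.im • (Pi.single r Complex.I : Fin n → ℂ) := by
    intro c r; ext j
    by_cases h : j = r <;> simp [h, Pi.single_apply, Complex.ext_iff]
  have hv : L v = L (∑ r, Pi.single r (v r)) := by
    congr 1; ext j; simp [Pi.single_apply]
  rw [hv, _root_.map_sum]
  apply Finset.sum_congr rfl
  intro r _
  rw [hsingle (v r) r, _root_.map_add, _root_.map_smul, _root_.map_smul]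

lemma wirt_key (A B c : ℂ) :
    ((c.re : ℂ) * A + (c.im : ℂ) * B)
      - Complex.I * (((Complex.I * c).re : ℂ) * A + ((Complex.I * c).im : ℂ) * B)
      = (A - Complex.I * B) * c := by
  have h : c = (c.re : ℂ) + (c.im : ℂ) * Complex.I := (Complex.re_add_im c).symm
  have h1 : ((Complex.I * c).re : ℂ) = -((c.im : ℂ)) := by
    simp
  have h2 : ((Complex.I * c).im : ℂ) = (c.re : ℂ) := by
    simp
  rw [h1, h2]
  linear_combination -(A - Complex.I * B) * h + (c.im : ℂ) * B * Complex.I_sq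

lemma linmap_decomp (L : (Fin n → ℂ) →L[ℝ] ℂ) (a : Fin n → ℂ) :
    L a - Complex.I * L (fun r => Complex.I * a r) =
      ∑ r, (L (Pi.single r 1) - Complex.I * L (Pi.single r Complex.I)) * a r := by
  rw [linmap_expand L a, linmap_expand L (fun r => Complex.I * a r), Finset.mul_sum,
    ← Finset.sum_sub_distrib]
  apply Finset.sum_congr rfl
  intro r _
  have hre : ∀ (t : ℝ) (c : ℂ), t • c = (t : ℂ) * c := fun t c => by
    rw [Complex.real_smul]
  rw [hre, hre, hre, hre]
  exact wirt_key (L (Pi.single r 1)) (L (Pi.single r Complex.I)) (a r)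

lemma wD_comp {z : (Fin n → ℂ) → (Fin n → ℂ)} {f : (Fin n → ℂ) → ℂ} {x : Fin n → ℂ}
    (hz : ∀ r, DifferentiableAt ℂ (fun w => z w r) x)
    (hf : DifferentiableAt ℝ f (z x)) (k : Fin n) :
    wD k (fun w => f (z w)) x = ∑ r, wD r f (z x) * wD k (fun w => z w r) x := by
  have hzR : ∀ r, DifferentiableAt ℝ (fun w => z w r) x := fun r => (hz r).restrictScalars ℝ
  have hzD : DifferentiableAt ℝ z x := differentiableAt_pi.2 hzR
  have hcomp : fderiv ℝ (fun w => f (z w)) x = (fderiv ℝ f (z x)).comp (fderiv ℝ z x) :=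
    fderiv_comp (x := x) hf hzD
  have hpi : ∀ v, fderiv ℝ z x v = fun r => fderiv ℝ (fun w => z w r) x v := by
    intro v
    rw [fderiv_pi hzR]
    rfl
  set L := fderiv ℝ f (z x) with hL
  set a : Fin n → ℂ := fun r => fderiv ℝ (fun w => z w r) x (Pi.single k 1) with ha
  have h1 : fderiv ℝ (fun w => f (z w)) x (Pi.single k 1) = L a := by
    rw [hcomp]; simp only [ContinuousLinearMap.comp_apply]; rw [hpi]
  have h2 : fderiv ℝ (fun w => f (z w)) x (Pi.single k Complex.I)
      = L (fun r => Complex.I * a r) := by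
    rw [hcomp]; simp only [ContinuousLinearMap.comp_apply]; rw [hpi]
    congr 1
    funext r
    exact fderiv_holo_I (hz r) k
  unfold wD
  rw [h1, h2, linmap_decomp L a, Finset.sum_div]
  apply Finset.sum_congr rfl
  intro r _
  simp only [ha, hL]
  rw [fderiv_holo_I (hz r) k]
  ring_nf
  rw [show (Complex.I : ℂ) ^ 3 = -Complex.I by rw [pow_succ, Complex.I_sq]; ring, Complex.I_sq]
  ring

lemma clm_apply_diff {f : (Fin n → ℂ) → ℂ} (hf : ContDiff ℝ 2 f) (v y : Fin n → ℂ) :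
    DifferentiableAt ℝ (fun w => fderiv ℝ f w v) y := by
  have h1 : ContDiff ℝ 1 (fderiv ℝ f) := hf.fderiv_right (by norm_num)
  exact (h1.differentiable one_ne_zero y).clm_apply (differentiableAt_const v)

lemma wD_fun_diff {f : (Fin n → ℂ) → ℂ} (hf : ContDiff ℝ 2 f) (i : Fin n) (y : Fin n → ℂ) :
    DifferentiableAt ℝ (fun w => wD i f w) y := by
  unfold wD
  simp only [div_eq_inv_mul]
  exact (((clm_apply_diff hf _ y).sub
    ((clm_apply_diff hf _ y).const_mul _))).const_mul _

lemma fderiv_clm_apply_const {f : (Fin n → ℂ) → ℂ} (hf : ContDiff ℝ 2 f)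
    (v : Fin n → ℂ) (x u : Fin n → ℂ) :
    fderiv ℝ (fun w => fderiv ℝ f w v) x u = fderiv ℝ (fderiv ℝ f) x u v := by
  have h1 : ContDiff ℝ 1 (fderiv ℝ f) := hf.fderiv_right (by norm_num)
  rw [fderiv_clm_apply (h1.differentiable one_ne_zero x) (differentiableAt_const v)]
  simp

lemma fderiv_wD_apply {f : (Fin n → ℂ) → ℂ} (hf : ContDiff ℝ 2 f) (i : Fin n)
    (x v : Fin n → ℂ) :
    fderiv ℝ (fun w => wD i f w) x v
      = (fderiv ℝ (fderiv ℝ f) x v (Pi.single i 1)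
         - Complex.I * fderiv ℝ (fderiv ℝ f) x v (Pi.single i Complex.I)) / 2 := by
  unfold wD
  simp only [div_eq_inv_mul]
  rw [fderiv_const_mul (((clm_apply_diff hf _ x).fun_sub ((clm_apply_diff hf _ x).const_mul _))),
    fderiv_fun_sub (clm_apply_diff hf _ x) ((clm_apply_diff hf _ x).const_mul _),
    fderiv_const_mul (clm_apply_diff hf _ x)]
  simp only [ContinuousLinearMap.coe_sub', Pi.sub_apply, ContinuousLinearMap.coe_smul',
    Pi.smul_apply, smul_eq_mul]
  rw [fderiv_clm_apply_const hf _ x v, fderiv_clm_apply_const hf _ x v]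

section snd
variable {f : (Fin n → ℂ) → ℂ} {x : Fin n → ℂ}

lemma snd_lin (hf : ContDiff ℝ 2 f) (hholo : ∀ᶠ w in nhds x, DifferentiableAt ℂ f w)
    (u : Fin n → ℂ) (j : Fin n) :
    fderiv ℝ (fderiv ℝ f) x u (Pi.single j Complex.I)
      = Complex.I * fderiv ℝ (fderiv ℝ f) x u (Pi.single j 1) := by
  have hev : (fun w => fderiv ℝ f w (Pi.single j Complex.I))
      =ᶠ[nhds x] (fun w => Complex.I * fderiv ℝ f w (Pi.single j 1)) := by
    filter_upwards [hholo] with w hw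
    exact fderiv_holo_I hw j
  have h1 := hev.fderiv_eq (𝕜 := ℝ)
  have h2 : fderiv ℝ (fun w => Complex.I * fderiv ℝ f w (Pi.single j 1)) x u
      = Complex.I * fderiv ℝ (fun w => fderiv ℝ f w (Pi.single j 1)) x u := by
    rw [fderiv_const_mul (clm_apply_diff hf (Pi.single j 1) x)]
    simp
  calc fderiv ℝ (fderiv ℝ f) x u (Pi.single j Complex.I)
      = fderiv ℝ (fun w => fderiv ℝ f w (Pi.single j Complex.I)) x u := by
        rw [fderiv_clm_apply_const hf _ x u]
    _ = Complex.I * fderiv ℝ (fderiv ℝ f) x u (Pi.single j 1) := by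
        rw [h1, h2, fderiv_clm_apply_const hf _ x u]

lemma wD_wD (hf : ContDiff ℝ 2 f) (hholo : ∀ᶠ w in nhds x, DifferentiableAt ℂ f w)
    (i k : Fin n) :
    wD k (fun w => wD i f w) x
      = fderiv ℝ (fderiv ℝ f) x (Pi.single k 1) (Pi.single i 1) := by
  have hsymm : ∀ v w, fderiv ℝ (fderiv ℝ f) x v w = fderiv ℝ (fderiv ℝ f) x w v :=
    hf.contDiffAt.isSymmSndFDerivAt (by norm_num)
  set S := fderiv ℝ (fderiv ℝ f) x with hS
  set A := S (Pi.single k 1) (Pi.single i 1) with hA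
  have e1 : S (Pi.single k 1) (Pi.single i Complex.I) = Complex.I * A :=
    snd_lin hf hholo _ i
  have e2 : S (Pi.single k Complex.I) (Pi.single i 1) = Complex.I * A := by
    rw [hsymm, snd_lin hf hholo _ k, hsymm]
  have e3 : S (Pi.single k Complex.I) (Pi.single i Complex.I)
      = Complex.I * (Complex.I * A) := by
    rw [snd_lin hf hholo _ i, e2]
  show (fderiv ℝ (fun w => wD i f w) x (Pi.single k 1)
    - Complex.I * fderiv ℝ (fun w => wD i f w) x (Pi.single k Complex.I)) / 2 = A
  rw [fderiv_wD_apply hf i x, fderiv_wD_apply hf i x, ← hS, e1, e2, e3]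
  linear_combination ((A * (Complex.I ^ 2 - 3)) / 4) * Complex.I_sq

lemma wD_conj_wD (hf : ContDiff ℝ 2 f) (hholo : ∀ᶠ w in nhds x, DifferentiableAt ℂ f w)
    (i k : Fin n) :
    wD k (fun w => (starRingEnd ℂ) (wD i f w)) x = 0 := by
  have hsymm : ∀ v w, fderiv ℝ (fderiv ℝ f) x v w = fderiv ℝ (fderiv ℝ f) x w v :=
    hf.contDiffAt.isSymmSndFDerivAt (by norm_num)
  set S := fderiv ℝ (fderiv ℝ f) x with hS
  set A := S (Pi.single k 1) (Pi.single i 1) with hA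
  have e1 : S (Pi.single k 1) (Pi.single i Complex.I) = Complex.I * A :=
    snd_lin hf hholo _ i
  have e2 : S (Pi.single k Complex.I) (Pi.single i 1) = Complex.I * A := by
    rw [hsymm, snd_lin hf hholo _ k, hsymm]
  have e3 : S (Pi.single k Complex.I) (Pi.single i Complex.I)
      = Complex.I * (Complex.I * A) := by
    rw [snd_lin hf hholo _ i, e2]
  show (fderiv ℝ (fun w => (starRingEnd ℂ) (wD i f w)) x (Pi.single k 1)
    - Complex.I * fderiv ℝ (fun w => (starRingEnd ℂ) (wD i f w)) x (Pi.single k Complex.I)) / 2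
    = 0
  rw [fderiv_conj (wD_fun_diff hf i x), fderiv_conj (wD_fun_diff hf i x),
    fderiv_wD_apply hf i x, fderiv_wD_apply hf i x, ← hS, e1, e2, e3]
  have hc : ∀ c : ℂ, (starRingEnd ℂ) (Complex.I * c) = -Complex.I * (starRingEnd ℂ) c := by
    intro c; rw [_root_.map_mul, Complex.conj_I]
  have h3 : (A - Complex.I * (Complex.I * A)) / 2 = A := by
    linear_combination (-(A : ℂ) / 2) * Complex.I_sq
  have h4 : (Complex.I * A - Complex.I * (Complex.I * (Complex.I * A))) / 2 = Complex.I * A := by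
    linear_combination (-(Complex.I * A : ℂ) / 2) * Complex.I_sq
  rw [h3, h4, hc A]
  linear_combination ((starRingEnd ℂ) A / 2) * Complex.I_sq

end snd

lemma fderiv_proj (r : Fin n) (x v : Fin n → ℂ) :
    fderiv ℝ (fun w : Fin n → ℂ => w r) x v = v r := by
  have h : (fun w : Fin n → ℂ => w r)
      = (ContinuousLinearMap.proj r : (Fin n → ℂ) →L[ℝ] ℂ) := rfl
  rw [h, ContinuousLinearMap.fderiv]
  rfl

lemma wD_proj (i r : Fin n) (x : Fin n → ℂ) :
    wD i (fun w => w r) x = if r = i then 1 else 0 := by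
  unfold wD
  rw [fderiv_proj, fderiv_proj]
  by_cases h : r = i
  · simp [h, Pi.single_apply, Complex.I_mul_I]
  · simp [h, Pi.single_apply]

theorem stmt8_aux (n : ℕ) (g : (Fin n → ℂ) → Matrix (Fin n) (Fin n) ℂ)
    (hg : ∀ k l, ContDiff ℝ 2 fun z => g z k l)
    (hg0 : g 0 = 1)
    (z : (Fin n → ℂ) → (Fin n → ℂ)) (hz0 : z 0 = 0)
    (hzsmooth : ∀ r, ContDiff ℝ 2 fun w => z w r)
    (hzholo : ∀ r, ∀ᶠ w in nhds 0, DifferentiableAt ℂ (fun w' => z w' r) w)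
    (hcoord : ∀ r, ∀ᶠ w in nhds (0 : Fin n → ℂ),
      w r = z w r + (∑ m ∈ Finset.univ.erase r,
          wD m (fun y => g y r r) 0 * z w m * z w r)
        + (1 / 2) * wD r (fun y => g y r r) 0 * (z w r) ^ 2) :
    ∀ i r : Fin n, wD i (fun w => z w r) 0 = if r = i then 1 else 0 := by
  intro i r
  have hzdiffR : ∀ m (y : Fin n → ℂ), DifferentiableAt ℝ (fun w => z w m) y := fun m y =>
    ((hzsmooth m).differentiable (by norm_num)).differentiableAt
  set a : Fin n → Fin n → ℂ := fun r m => wD m (fun y => g y r r) 0 with ha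
  have hev : (fun w : Fin n → ℂ => w r) =ᶠ[nhds 0]
      (fun w => z w r + (∑ m ∈ Finset.univ.erase r, a r m * z w m * z w r)
        + (1 / 2) * a r r * (z w r) ^ 2) := hcoord r
  have h1 := wD_congr (i := i) hev
  rw [wD_proj] at h1
  -- differentiability of pieces at 0
  have hsumdiff : DifferentiableAt ℝ
      (fun w => ∑ m ∈ Finset.univ.erase r, a r m * z w m * z w r) 0 := by
    apply DifferentiableAt.fun_sum
    intro m _
    exact (((hzdiffR m 0).const_mul (a r m)).mul (hzdiffR r 0))
  have hsqdiff : DifferentiableAt ℝ (fun w => (z w r) ^ 2) 0 := by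
    have h : (fun w => (z w r) ^ 2) = fun w => z w r * z w r := by
      funext w; ring
    rw [h]; exact (hzdiffR r 0).mul (hzdiffR r 0)
  rw [wD_add ((hzdiffR r 0).fun_add hsumdiff) (hsqdiff.const_mul _),
    wD_add (hzdiffR r 0) hsumdiff, wD_const_mul _ hsqdiff] at h1
  -- the sum term vanishes at 0
  have hsum0 : wD i (fun w => ∑ m ∈ Finset.univ.erase r, a r m * z w m * z w r) 0 = 0 := by
    rw [wD_sum (fun m _ => ((hzdiffR m 0).const_mul (a r m)).fun_mul (hzdiffR r 0))]
    apply Finset.sum_eq_zero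
    intro m _
    rw [show (fun w => a r m * z w m * z w r) = fun w => (a r m * z w m) * z w r from rfl,
      wD_mul ((hzdiffR m 0).const_mul (a r m)) (hzdiffR r 0)]
    simp [hz0]
  have hsq0 : wD i (fun w => (z w r) ^ 2) 0 = 0 := by
    have h : (fun w => (z w r) ^ 2) = fun w => z w r * z w r := by
      funext w; ring
    rw [h, wD_mul (hzdiffR r 0) (hzdiffR r 0)]
    simp [hz0]
  rw [hsum0, hsq0] at h1
  simpa using h1.symm

theorem stmt8_auxB (n : ℕ) (g : (Fin n → ℂ) → Matrix (Fin n) (Fin n) ℂ)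
    (hg : ∀ k l, ContDiff ℝ 2 fun z => g z k l)
    (hg0 : g 0 = 1)
    (z : (Fin n → ℂ) → (Fin n → ℂ)) (hz0 : z 0 = 0)
    (hzsmooth : ∀ r, ContDiff ℝ 2 fun w => z w r)
    (hzholo : ∀ r, ∀ᶠ w in nhds 0, DifferentiableAt ℂ (fun w' => z w' r) w)
    (hcoord : ∀ r, ∀ᶠ w in nhds (0 : Fin n → ℂ),
      w r = z w r + (∑ m ∈ Finset.univ.erase r,
          wD m (fun y => g y r r) 0 * z w m * z w r)
        + (1 / 2) * wD r (fun y => g y r r) 0 * (z w r) ^ 2) :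
    ∀ r i k : Fin n, wD k (fun w => wD i (fun w' => z w' r) w) 0
      = -((∑ m ∈ Finset.univ.erase r,
           (wD m (fun y => g y r r) 0 * ((if m = i then (1:ℂ) else 0) * (if r = k then 1 else 0))
            + wD m (fun y => g y r r) 0 * ((if m = k then (1:ℂ) else 0) * (if r = i then 1 else 0))))
         + wD r (fun y => g y r r) 0 * ((if r = k then (1:ℂ) else 0) * (if r = i then 1 else 0))) := by
  intro r i k
  have hzdiffR : ∀ m (y : Fin n → ℂ), DifferentiableAt ℝ (fun w => z w m) y := fun m y =>
    ((hzsmooth m).differentiable (by norm_num)).differentiableAt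
  have hstepA := stmt8_aux n g hg hg0 z hz0 hzsmooth hzholo hcoord
  set a : Fin n → Fin n → ℂ := fun r m => wD m (fun y => g y r r) 0 with ha
  -- eventual first-derivative identity
  have hev2 : (fun _ : Fin n → ℂ => (if r = i then (1:ℂ) else 0)) =ᶠ[nhds 0]
      (fun w => wD i (fun w' => z w' r) w
        + (∑ m ∈ Finset.univ.erase r,
            (a r m * (wD i (fun w' => z w' m) w * z w r)
             + a r m * (z w m * wD i (fun w' => z w' r) w)))
        + a r r * (z w r * wD i (fun w' => z w' r) w)) := by
    filter_upwards [(hcoord r).eventually_nhds] with w hw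
    have heq : (fun w' : Fin n → ℂ => w' r) =ᶠ[nhds w]
        (fun w' => z w' r + (∑ m ∈ Finset.univ.erase r, a r m * z w' m * z w' r)
          + (1 / 2) * a r r * (z w' r) ^ 2) := hw
    have h1 := wD_congr (i := i) heq
    rw [wD_proj] at h1
    have hsumdiff : DifferentiableAt ℝ
        (fun w' => ∑ m ∈ Finset.univ.erase r, a r m * z w' m * z w' r) w := by
      apply DifferentiableAt.fun_sum
      intro m _
      exact (((hzdiffR m w).const_mul (a r m)).mul (hzdiffR r w))
    have hsq : (fun w' => (z w' r) ^ 2) = fun w' => z w' r * z w' r := by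
      funext w'; ring
    have hsqdiff : DifferentiableAt ℝ (fun w' => (z w' r) ^ 2) w := by
      rw [hsq]; exact (hzdiffR r w).mul (hzdiffR r w)
    rw [wD_add ((hzdiffR r w).fun_add hsumdiff) (hsqdiff.const_mul _),
      wD_add (hzdiffR r w) hsumdiff, wD_const_mul _ hsqdiff] at h1
    have hterm : ∀ m ∈ Finset.univ.erase r,
        wD i (fun w' => a r m * z w' m * z w' r) w
          = a r m * (wD i (fun w' => z w' m) w * z w r)
            + a r m * (z w m * wD i (fun w' => z w' r) w) := by
      intro m _
      rw [show (fun w' => a r m * z w' m * z w' r)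
          = fun w' => (a r m * z w' m) * z w' r from rfl,
        wD_mul ((hzdiffR m w).const_mul (a r m)) (hzdiffR r w),
        wD_const_mul _ (hzdiffR m w)]
      ring
    rw [wD_sum (fun m _ => ((hzdiffR m w).const_mul (a r m)).fun_mul (hzdiffR r w)),
      Finset.sum_congr rfl hterm] at h1
    have hsqw : wD i (fun w' => (z w' r) ^ 2) w
        = wD i (fun w' => z w' r) w * z w r + z w r * wD i (fun w' => z w' r) w := by
      rw [hsq, wD_mul (hzdiffR r w) (hzdiffR r w)]
    rw [hsqw] at h1
    rw [h1]; ring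
  -- differentiate at 0
  have h2 := wD_congr (i := k) hev2
  rw [wD_const] at h2
  have hZdiff : ∀ m (y : Fin n → ℂ),
      DifferentiableAt ℝ (fun w => wD i (fun w' => z w' m) w) y := fun m y =>
    wD_fun_diff (hzsmooth m) i y
  have d1 : ∀ m (y : Fin n → ℂ), DifferentiableAt ℝ
      (fun w => a r m * (wD i (fun w' => z w' m) w * z w r)) y := fun m y =>
    ((hZdiff m y).mul (hzdiffR r y)).const_mul _
  have d2 : ∀ m (y : Fin n → ℂ), DifferentiableAt ℝ
      (fun w => a r m * (z w m * wD i (fun w' => z w' r) w)) y := fun m y =>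
    (((hzdiffR m y).mul (hZdiff r y))).const_mul _
  have hsumdiff0 : DifferentiableAt ℝ (fun w => ∑ m ∈ Finset.univ.erase r,
      (a r m * (wD i (fun w' => z w' m) w * z w r)
       + a r m * (z w m * wD i (fun w' => z w' r) w))) 0 :=
    DifferentiableAt.fun_sum (fun m _ => (d1 m 0).fun_add (d2 m 0))
  have d3 : DifferentiableAt ℝ
      (fun w => a r r * (z w r * wD i (fun w' => z w' r) w)) 0 :=
    ((hzdiffR r 0).mul (hZdiff r 0)).const_mul _
  rw [wD_add ((hZdiff r 0).fun_add hsumdiff0) d3, wD_add (hZdiff r 0) hsumdiff0,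
    wD_sum (fun m _ => (d1 m 0).fun_add (d2 m 0))] at h2
  have hterm0 : ∀ m ∈ Finset.univ.erase r,
      wD k (fun w => a r m * (wD i (fun w' => z w' m) w * z w r)
        + a r m * (z w m * wD i (fun w' => z w' r) w)) 0
      = a r m * ((if m = i then (1:ℂ) else 0) * (if r = k then 1 else 0))
        + a r m * ((if m = k then (1:ℂ) else 0) * (if r = i then 1 else 0)) := by
    intro m _
    rw [wD_add (d1 m 0) (d2 m 0),
      wD_const_mul _ ((hZdiff m 0).fun_mul (hzdiffR r 0)),
      wD_const_mul _ ((hzdiffR m 0).fun_mul (hZdiff r 0)),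
      wD_mul (hZdiff m 0) (hzdiffR r 0),
      wD_mul (hzdiffR m 0) (hZdiff r 0)]
    rw [hstepA i m, hstepA k r, hstepA k m, hstepA i r]
    simp [hz0]
  rw [Finset.sum_congr rfl hterm0] at h2
  have hlast : wD k (fun w => a r r * (z w r * wD i (fun w' => z w' r) w)) 0
      = a r r * ((if r = k then (1:ℂ) else 0) * (if r = i then 1 else 0)) := by
    rw [wD_const_mul _ ((hzdiffR r 0).fun_mul (hZdiff r 0)),
      wD_mul (hzdiffR r 0) (hZdiff r 0), hstepA k r, hstepA i r]
    simp [hz0]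
  rw [hlast] at h2
  linear_combination -h2

/-- Special coordinates: with `g_{ij̄}(0) = δᵢⱼ` and new coordinates
`w_r = z_r + ∑_{m≠r} ∂g_{rr̄}/∂z_m(0) z_m z_r + ½ ∂g_{rr̄}/∂z_r(0) z_r²`
(here `z = z(w)` is the inverse holomorphic coordinate map), the transformed
metric `g̃_{ij̄}(w) = ∑ g_{rs̄}(z(w)) ∂z_r/∂wᵢ conj(∂z_s/∂wⱼ)` satisfies at `0`:
`g̃_{ij̄} = δᵢⱼ`, `∂g̃_{iī}/∂w_k = 0`, and `∂g̃_{ij̄}/∂wⱼ = T^j_{ji}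
= ∂g_{ij̄}/∂zⱼ − ∂g_{jj̄}/∂zᵢ` for `i ≠ j`. -/
theorem stmt8 (n : ℕ) (g : (Fin n → ℂ) → Matrix (Fin n) (Fin n) ℂ)
    (hg : ∀ k l, ContDiff ℝ 2 fun z => g z k l)
    (hg0 : g 0 = 1)
    (z : (Fin n → ℂ) → (Fin n → ℂ)) (hz0 : z 0 = 0)
    (hzsmooth : ∀ r, ContDiff ℝ 2 fun w => z w r)
    (hzholo : ∀ r, ∀ᶠ w in nhds 0, DifferentiableAt ℂ (fun w' => z w' r) w)
    (hcoord : ∀ r, ∀ᶠ w in nhds (0 : Fin n → ℂ),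
      w r = z w r + (∑ m ∈ Finset.univ.erase r,
          wD m (fun y => g y r r) 0 * z w m * z w r)
        + (1 / 2) * wD r (fun y => g y r r) 0 * (z w r) ^ 2) :
    (let gt : Fin n → Fin n → (Fin n → ℂ) → ℂ := fun i j w =>
       ∑ r, ∑ s, g (z w) r s * wD i (fun w' => z w' r) w *
         (starRingEnd ℂ) (wD j (fun w' => z w' s) w)
     (∀ i j, gt i j 0 = if i = j then 1 else 0) ∧
     (∀ i k, wD k (gt i i) 0 = 0) ∧
     (∀ i j, i ≠ j → wD j (gt i j) 0 =
        wD j (fun y => g y i j) 0 - wD i (fun y => g y j j) 0)) := by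
  intro gt
  have hzdiffR : ∀ m (y : Fin n → ℂ), DifferentiableAt ℝ (fun w => z w m) y := fun m y =>
    ((hzsmooth m).differentiable (by norm_num)).differentiableAt
  have hzholo0 : ∀ r, DifferentiableAt ℂ (fun w' => z w' r) 0 := fun r =>
    (hzholo r).self_of_nhds
  have hstepA := stmt8_aux n g hg hg0 z hz0 hzsmooth hzholo hcoord
  have hQ := stmt8_auxB n g hg hg0 z hz0 hzsmooth hzholo hcoord
  have hzpidiff : ∀ y : Fin n → ℂ, DifferentiableAt ℝ z y := fun y =>
    differentiableAt_pi.2 (fun m => hzdiffR m y)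
  have hGdiff : ∀ r s (y : Fin n → ℂ), DifferentiableAt ℝ (fun w => g (z w) r s) y :=
    fun r s y =>
      (((hg r s).differentiable (by norm_num)).differentiableAt).comp y (hzpidiff y)
  have hZdiff : ∀ (i m : Fin n) (y : Fin n → ℂ),
      DifferentiableAt ℝ (fun w => wD i (fun w' => z w' m) w) y := fun i m y =>
    wD_fun_diff (hzsmooth m) i y
  have hCdiff : ∀ (j s : Fin n) (y : Fin n → ℂ),
      DifferentiableAt ℝ (fun w => (starRingEnd ℂ) (wD j (fun w' => z w' s) w)) y :=
    fun j s y => conj_differentiableAt (hZdiff j s y)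
  -- chain rule for g ∘ z
  have hG : ∀ (r s k : Fin n), wD k (fun w => g (z w) r s) 0 = wD k (fun y => g y r s) 0 := by
    intro r s k
    have := wD_comp (z := z) (f := fun y => g y r s) (x := 0) hzholo0
      (by rw [hz0]; exact ((hg r s).differentiable (by norm_num)).differentiableAt) k
    rw [this, hz0]
    simp only [hstepA]
    simp [Finset.sum_ite_eq', mul_ite, mul_one, mul_zero]
  -- main derivative formula
  have hMain : ∀ i j k, wD k (gt i j) 0 = wD k (fun y => g y i j) 0
      + wD k (fun w => wD i (fun w' => z w' j) w) 0 := by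
    intro i j k
    have hterm : ∀ r s : Fin n,
        wD k (fun w => g (z w) r s * wD i (fun w' => z w' r) w *
          (starRingEnd ℂ) (wD j (fun w' => z w' s) w)) 0
        = (wD k (fun y => g y r s) 0 * (if r = i then 1 else 0)
            + (if r = s then (1:ℂ) else 0) * wD k (fun w => wD i (fun w' => z w' r) w) 0)
          * (if s = j then 1 else 0) := by
      intro r s
      rw [wD_mul ((hGdiff r s 0).fun_mul (hZdiff i r 0)) (hCdiff j s 0),
        wD_mul (hGdiff r s 0) (hZdiff i r 0),
        wD_conj_wD (hzsmooth s) (hzholo s) j k,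
        hG r s k, hstepA i r, hstepA j s]
      have hg00 : g (z 0) r s = if r = s then (1:ℂ) else 0 := by
        rw [hz0, hg0, Matrix.one_apply]
      rw [hg00]
      by_cases hsj : s = j <;> simp [hsj]
    have hsumdiff : ∀ r : Fin n, DifferentiableAt ℝ
        (fun w => ∑ s, g (z w) r s * wD i (fun w' => z w' r) w *
          (starRingEnd ℂ) (wD j (fun w' => z w' s) w)) 0 :=
      fun r => DifferentiableAt.fun_sum (fun s _ =>
        ((hGdiff r s 0).fun_mul (hZdiff i r 0)).fun_mul (hCdiff j s 0))
    have hunfold : wD k (gt i j) 0 = ∑ r, ∑ s,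
        wD k (fun w => g (z w) r s * wD i (fun w' => z w' r) w *
          (starRingEnd ℂ) (wD j (fun w' => z w' s) w)) 0 := by
      rw [show gt i j = fun w => ∑ r, ∑ s, g (z w) r s * wD i (fun w' => z w' r) w *
          (starRingEnd ℂ) (wD j (fun w' => z w' s) w) from rfl,
        wD_sum (fun r _ => hsumdiff r)]
      exact Finset.sum_congr rfl (fun r _ => wD_sum (fun s _ =>
        ((hGdiff r s 0).fun_mul (hZdiff i r 0)).fun_mul (hCdiff j s 0)))
    rw [hunfold]
    rw [Finset.sum_congr rfl (fun r _ => Finset.sum_congr rfl (fun s _ => hterm r s))]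
    simp [Finset.sum_ite_eq', mul_ite, ite_mul, mul_one, mul_zero, one_mul, zero_mul,
      Finset.sum_add_distrib, add_mul]
  refine ⟨?_, ?_, ?_⟩
  · -- value at 0
    intro i j
    show (∑ r, ∑ s, g (z 0) r s * wD i (fun w' => z w' r) 0 *
      (starRingEnd ℂ) (wD j (fun w' => z w' s) 0)) = if i = j then 1 else 0
    simp only [hz0, hg0, hstepA, Matrix.one_apply, apply_ite (starRingEnd ℂ), _root_.map_one, _root_.map_zero]
    simp [Finset.sum_ite_eq', mul_ite, ite_mul, mul_one, mul_zero, one_mul, zero_mul]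
  · -- diagonal derivatives vanish
    intro i k
    rw [hMain i i k, hQ i i k]
    have e1 : ∀ m ∈ Finset.univ.erase i,
        wD m (fun y => g y i i) 0 * ((if m = i then (1:ℂ) else 0) * (if i = k then 1 else 0))
          + wD m (fun y => g y i i) 0 * ((if m = k then (1:ℂ) else 0) * (if i = i then 1 else 0))
        = if m = k then wD m (fun y => g y i i) 0 else 0 := by
      intro m hm
      rw [show (if m = i then (1:ℂ) else 0) = 0 by simp [(Finset.mem_erase.1 hm).1]]
      by_cases hmk : m = k <;> simp [hmk]
    rw [Finset.sum_congr rfl e1, Finset.sum_ite_eq' (Finset.univ.erase i) k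
      (fun m => wD m (fun y => g y i i) 0)]
    by_cases hk : k = i
    · rw [hk]
      simp
    · have h1 : k ∈ Finset.univ.erase i := Finset.mem_erase.2 ⟨hk, Finset.mem_univ k⟩
      rw [if_pos h1, show (if i = k then (1:ℂ) else 0) = 0 by simp [Ne.symm hk]]
      ring
  · -- off-diagonal
    intro i j hij
    rw [hMain i j j, hQ j i j]
    have e1 : ∀ m ∈ Finset.univ.erase j,
        wD m (fun y => g y j j) 0 * ((if m = i then (1:ℂ) else 0) * (if j = j then 1 else 0))
          + wD m (fun y => g y j j) 0 * ((if m = j then (1:ℂ) else 0) * (if j = i then 1 else 0))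
        = if m = i then wD m (fun y => g y j j) 0 else 0 := by
      intro m hm
      rw [show (if j = i then (1:ℂ) else 0) = 0 by simp [Ne.symm hij]]
      by_cases hmi : m = i <;> simp [hmi]
    rw [Finset.sum_congr rfl e1, Finset.sum_ite_eq' (Finset.univ.erase j) i
      (fun m => wD m (fun y => g y j j) 0)]
    have h1 : i ∈ Finset.univ.erase j := Finset.mem_erase.2 ⟨hij, Finset.mem_univ i⟩
    rw [if_pos h1, show (if j = i then (1:ℂ) else 0) = 0 by simp [Ne.symm hij]]
    ring
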